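/- arXiv:2507.10068 — 2 statements merged into one kernel-verified Lean document; each statement's English description precedes it below -/
import Mathlib

section
/- Let d_m(W) denote the minimum distance of 𝒜(m,W). For W = {r₁,…,r₂} with 0 < r₁ ≤ r₂ < m, d_m(W) ≥ min{ D₂, 2·d_{m−1}(W₋₁,₋₁), max{ 3·d_{m−1}(W₋₁,₀), min{ 3·d_{m−1}(W), d_{m−1}(W₋₁,₋₁) + d_{m−1}(W₋₁,₀) } } }, where D₂ = d_{m−1}({r₁,…,r₂−1}) if r₁ < r₂ and D₂ = +∞ if r₁ = r₂, W₋₁,₋₁ = {r₁−1,…,r₂−1}, and W₋₁,₀ = {r₁−1,…,r₂}. -/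
open Finset

abbrev F2 := ZMod 2
abbrev F4 := GaloisField 2 2

def A3 : Matrix (ZMod 3) (ZMod 3) F2 := !![1,1,1; 1,1,0; 1,0,1]

/-- The `m`-fold Kronecker power of `A3`, with rows and columns indexed by `Fin m → ZMod 3`. -/
def A3pow (m : ℕ) : Matrix (Fin m → ZMod 3) (Fin m → ZMod 3) F2 :=
  fun r c => ∏ i, A3 (r i) (c i)

/-- The DFT coefficient at frequency `j` as an `F2`-linear functional. -/
noncomputable def dftL (m : ℕ) (α : F4) (j : Fin m → ZMod 3) :
    ((Fin m → ZMod 3) → F2) →ₗ[F2] F4 :=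
  ∑ i : Fin m → ZMod 3,
    α ^ (∑ l, i l * j l).val • ((Algebra.linearMap F2 F4).comp (LinearMap.proj i))

/-- The abelian code with frequency weight set `W`. -/
noncomputable def abelianCode (m : ℕ) (α : F4) (W : Finset ℕ) :
    Submodule F2 ((Fin m → ZMod 3) → F2) :=
  ⨅ j ∈ {j : Fin m → ZMod 3 | hammingNorm j ∉ W}, LinearMap.ker (dftL m α j)

noncomputable def ddft (m : ℕ) (α : F4) (a : (Fin m → ZMod 3) → F2)
    (j : Fin m → ZMod 3) : F4 :=
  ∑ i, α ^ (∑ l, i l * j l).val * algebraMap F2 F4 (a i)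

lemma dftL_eq (m : ℕ) (α : F4) (j a) : dftL m α j a = ddft m α a j := by
  simp [dftL, ddft, Algebra.smul_def]

lemma mem_code (m : ℕ) (α : F4) (W : Finset ℕ) (a : (Fin m → ZMod 3) → F2) :
    a ∈ abelianCode m α W ↔ ∀ j, hammingNorm j ∉ W → ddft m α a j = 0 := by
  simp [abelianCode, Submodule.mem_iInf, LinearMap.mem_ker, dftL_eq]

lemma ddft_add (m : ℕ) (α : F4) (a b : (Fin m → ZMod 3) → F2) (j) :
    ddft m α (a + b) j = ddft m α a j + ddft m α b j := by
  rw [← dftL_eq, ← dftL_eq, ← dftL_eq, map_add]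

section alpha
variable {α : F4} (hα : orderOf α = 3)
include hα

lemma pow_val_add (a b : ZMod 3) : α ^ (a + b).val = α ^ a.val * α ^ b.val := by
  have h := pow_mod_orderOf α (a.val + b.val)
  rw [hα] at h
  rw [ZMod.val_add, h, pow_add]

lemma alpha_sum : (1 : F4) + α + α ^ 2 = 0 := by
  have h3 : α ^ 3 = 1 := by rw [← hα]; exact pow_orderOf_eq_one α
  have h1 : α ≠ 1 := by intro h; rw [h, orderOf_one] at hα; omega
  have h : (α - 1) * (1 + α + α ^ 2) = 0 := by linear_combination h3
  rcases mul_eq_zero.mp h with h | h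
  · exact absurd (sub_eq_zero.mp h) h1
  · exact h

omit hα in
lemma two_eq_zero : (2 : F4) = 0 := by
  exact_mod_cast CharP.cast_eq_zero F4 2

end alpha





lemma zmod3_sum {M : Type*} [AddCommMonoid M] (f : ZMod 3 → M) :
    ∑ t : ZMod 3, f t = f 0 + f 1 + f 2 := by
  show ∑ t : Fin 3, f t = f 0 + f 1 + f 2
  exact Fin.sum_univ_three f

lemma sum_cons_split {M : Type*} [AddCommMonoid M] (n : ℕ)
    (f : (Fin (n+1) → ZMod 3) → M) :
    ∑ i, f i = ∑ t : ZMod 3, ∑ x : Fin n → ZMod 3, f (Fin.cons t x) := by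
  rw [← (Fin.consEquiv (fun _ => ZMod 3)).sum_comp f, Fintype.sum_prod_type]
  rfl

def comp (n : ℕ) (c : (Fin (n+1) → ZMod 3) → F2) (t : ZMod 3) :
    (Fin n → ZMod 3) → F2 := fun x => c (Fin.cons t x)

lemma comp_eq_zero (n : ℕ) (c : (Fin (n+1) → ZMod 3) → F2)
    (h : ∀ t, comp n c t = 0) : c = 0 := by
  funext i
  have := congrFun (h (i 0)) (Fin.tail i)
  rwa [comp, Fin.cons_self_tail] at this

lemma norm_cons (n : ℕ) (k : ZMod 3) (j : Fin n → ZMod 3) :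
    hammingNorm (Fin.cons k j : Fin (n+1) → ZMod 3) = (if k = 0 then 0 else 1) + hammingNorm j := by
  unfold hammingNorm
  rw [Finset.card_filter, Finset.card_filter, Fin.sum_univ_succ]
  simp [Fin.cons_zero, Fin.cons_succ, ite_not]

lemma norm_split (n : ℕ) (c : (Fin (n+1) → ZMod 3) → F2) :
    hammingNorm c = ∑ t : ZMod 3, hammingNorm (comp n c t) := by
  simp only [hammingNorm, Finset.card_filter]
  rw [sum_cons_split]
  rfl

lemma hnorm_add_le (n : ℕ) (a b : (Fin n → ZMod 3) → F2) :
    hammingNorm (a + b) ≤ hammingNorm a + hammingNorm b := by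
  have h1 := hammingDist_triangle (a+b) b 0
  rw [hammingDist_zero_right] at h1
  calc hammingNorm (a+b) ≤ hammingDist (a+b) b + hammingNorm b := h1
  _ = hammingNorm a + hammingNorm b := by rw [hammingDist_eq_hammingNorm]; ring_nf; rw [add_comm, show -a = a from neg_eq_of_add_eq_zero_left (CharTwo.add_self_eq_zero a)]

section main
variable {α : F4} (hα : orderOf α = 3)
include hα

lemma ddft_cons (n : ℕ) (c : (Fin (n+1) → ZMod 3) → F2) (k : ZMod 3) (j : Fin n → ZMod 3) :
    ddft (n+1) α c (Fin.cons k j) =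
      ∑ t : ZMod 3, α ^ (t * k).val * ddft n α (comp n c t) j := by
  rw [ddft, sum_cons_split]
  refine Finset.sum_congr rfl fun t _ => ?_
  rw [ddft, Finset.mul_sum]
  refine Finset.sum_congr rfl fun x _ => ?_
  have he : (∑ l, (Fin.cons t x : Fin (n+1) → ZMod 3) l * (Fin.cons k j : Fin (n+1) → ZMod 3) l)
      = t * k + ∑ l, x l * j l := by
    rw [Fin.sum_univ_succ]
    simp [Fin.cons_zero, Fin.cons_succ]
  rw [he, pow_val_add hα, mul_assoc]
  rfl

lemma sum_pow_val (x0 : ZMod 3) :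
    (∑ t : ZMod 3, α ^ (x0 * t).val) = if x0 = 0 then 1 else 0 := by
  have h2 : (2 : F4) = 0 := two_eq_zero
  have hs : (1 : F4) + α + α ^ 2 = 0 := alpha_sum hα
  rw [zmod3_sum (fun t => α ^ (x0 * t).val)]
  have h3 : x0 = 0 ∨ x0 = 1 ∨ x0 = 2 := by
    revert x0; decide
  rcases h3 with h | h | h <;> subst h
  · have e0 : ((0*0 : ZMod 3)).val = 0 := rfl
    have e1 : ((0*1 : ZMod 3)).val = 0 := rfl
    have e2 : ((0*2 : ZMod 3)).val = 0 := rfl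
    rw [if_pos rfl, e0, e1, e2, pow_zero]
    linear_combination h2
  · have e0 : ((1*0 : ZMod 3)).val = 0 := rfl
    have e1 : ((1*1 : ZMod 3)).val = 1 := rfl
    have e2 : ((1*2 : ZMod 3)).val = 2 := rfl
    rw [if_neg (by decide), e0, e1, e2, pow_zero, pow_one]
    linear_combination hs
  · have e0 : ((2*0 : ZMod 3)).val = 0 := rfl
    have e1 : ((2*1 : ZMod 3)).val = 2 := rfl
    have e2 : ((2*2 : ZMod 3)).val = 1 := rfl
    rw [if_neg (by decide), e0, e1, e2, pow_zero, pow_one]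
    linear_combination hs

lemma orth : ∀ (n : ℕ) (x : Fin n → ZMod 3),
    (∑ j : Fin n → ZMod 3, α ^ (∑ l, x l * j l).val) = if x = 0 then 1 else 0 := by
  intro n
  induction n with
  | zero =>
    intro x
    have hx : x = 0 := funext fun l => l.elim0
    simp [hx]
  | succ n ih =>
    intro x
    rw [sum_cons_split n (fun j => α ^ (∑ l, x l * j l).val)]
    have hsplit : ∀ (k : ZMod 3) (j : Fin n → ZMod 3),
        α ^ (∑ l, x l * (Fin.cons k j : Fin (n+1) → ZMod 3) l).val
          = α ^ (x 0 * k).val * α ^ (∑ l, Fin.tail x l * j l).val := by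
      intro k j
      rw [← pow_val_add hα]
      congr 1
      rw [Fin.sum_univ_succ]
      simp [Fin.cons_zero, Fin.cons_succ, Fin.tail]
    have hmain : (∑ t : ZMod 3, ∑ j : Fin n → ZMod 3,
          α ^ (∑ l, x l * (Fin.cons t j : Fin (n+1) → ZMod 3) l).val)
        = (∑ t : ZMod 3, α ^ (x 0 * t).val) * (if Fin.tail x = 0 then 1 else 0) := by
      rw [← ih (Fin.tail x), Finset.sum_mul]
      refine Finset.sum_congr rfl fun t _ => ?_
      rw [Finset.mul_sum]
      exact Finset.sum_congr rfl fun j _ => hsplit t j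
    rw [hmain, sum_pow_val hα]
    have hx0 : x = 0 ↔ (x 0 = 0 ∧ Fin.tail x = 0) := by
      constructor
      · intro h; rw [h]; exact ⟨rfl, rfl⟩
      · rintro ⟨h1, h2⟩
        funext l
        refine Fin.cases ?_ ?_ l
        · exact h1
        · intro i; exact congrFun h2 i
    by_cases h1 : x 0 = 0 <;> by_cases h2 : Fin.tail x = 0 <;>
      simp [h1, h2, hx0]

end main

section main2
variable {α : F4} (hα : orderOf α = 3)
include hα

lemma eq_zero_of_ddft_zero (n : ℕ) (a : (Fin n → ZMod 3) → F2)
    (h : ∀ j, ddft n α a j = 0) : a = 0 := by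
  funext i
  have key : (∑ j : Fin n → ZMod 3, α ^ (∑ l, (2 * i l + 0) * j l).val * ddft n α a j)
      = algebraMap F2 F4 (a i) := by
    calc (∑ j : Fin n → ZMod 3, α ^ (∑ l, (2 * i l + 0) * j l).val * ddft n α a j)
        = ∑ j : Fin n → ZMod 3, ∑ i', α ^ (∑ l, (fun l => 2 * i l + i' l) l * j l).val
            * algebraMap F2 F4 (a i') := by
          refine Finset.sum_congr rfl fun j _ => ?_
          rw [ddft, Finset.mul_sum]
          refine Finset.sum_congr rfl fun i' _ => ?_
          have hee : (∑ l, (2 * i l + 0) * j l) + (∑ l, i' l * j l)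
              = ∑ l, (fun l => 2 * i l + i' l) l * j l := by
            rw [← Finset.sum_add_distrib]
            exact Finset.sum_congr rfl fun l _ => by ring
          rw [← mul_assoc, ← pow_val_add hα, hee]
      _ = ∑ i', (∑ j : Fin n → ZMod 3, α ^ (∑ l, (fun l => 2 * i l + i' l) l * j l).val)
            * algebraMap F2 F4 (a i') := by
          rw [Finset.sum_comm]
          exact Finset.sum_congr rfl fun i' _ => by rw [Finset.sum_mul]
      _ = ∑ i', (if i' = i then (1:F4) else 0) * algebraMap F2 F4 (a i') := by
          refine Finset.sum_congr rfl fun i' _ => ?_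
          rw [orth hα]
          congr 1
          have hiff : ((fun l => 2 * i l + i' l) = 0) ↔ i' = i := by
            constructor
            · intro h'
              funext l
              have := congrFun h' l
              have hz : ∀ a b : ZMod 3, 2 * a + b = 0 → b = a := by decide
              exact hz _ _ this
            · intro h'
              subst h'
              funext l
              have hz : ∀ a : ZMod 3, 2 * a + a = 0 := by decide
              exact hz _
          simp [hiff]
      _ = algebraMap F2 F4 (a i) := by
          simp [ite_mul]
  have hz : (∑ j : Fin n → ZMod 3, α ^ (∑ l, (2 * i l + 0) * j l).val * ddft n α a j) = 0 := by
    refine Finset.sum_eq_zero fun j _ => ?_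
    rw [h j, mul_zero]
  rw [hz] at key
  have := (algebraMap F2 F4).injective (key.symm.trans (map_zero _).symm)
  exact this

lemma code_empty (n : ℕ) (a : (Fin n → ZMod 3) → F2)
    (h : a ∈ abelianCode n α ∅) : a = 0 := by
  apply eq_zero_of_ddft_zero hα
  intro j
  exact (mem_code n α ∅ a).mp h j (by simp)

omit hα in
lemma code_inter (n : ℕ) (W₁ W₂ W₃ : Finset ℕ)
    (hW : ∀ w, w ∉ W₃ → w ∉ W₁ ∨ w ∉ W₂) (a : (Fin n → ZMod 3) → F2)
    (h1 : a ∈ abelianCode n α W₁) (h2 : a ∈ abelianCode n α W₂) :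
    a ∈ abelianCode n α W₃ := by
  rw [mem_code] at *
  intro j hj
  rcases hW _ hj with h | h
  · exact h1 j h
  · exact h2 j h

lemma sum_ddft (n r₁ r₂ : ℕ) (c : (Fin (n+1) → ZMod 3) → F2)
    (hc : c ∈ abelianCode (n+1) α (Finset.Icc r₁ r₂)) (j : Fin n → ZMod 3)
    (hj : hammingNorm j ∉ Finset.Icc r₁ r₂) :
    ddft n α (comp n c 0) j + ddft n α (comp n c 1) j + ddft n α (comp n c 2) j = 0 := by
  have hn : hammingNorm (Fin.cons (0:ZMod 3) j : Fin (n+1) → ZMod 3) ∉ Finset.Icc r₁ r₂ := by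
    rw [norm_cons, if_pos rfl, zero_add]; exact hj
  have hE := (mem_code (n+1) α _ c).mp hc _ hn
  rw [ddft_cons hα] at hE
  rw [zmod3_sum (fun t => α ^ (t*(0:ZMod 3)).val * ddft n α (comp n c t) j)] at hE
  have e0 : (((0:ZMod 3)*0)).val = 0 := rfl
  have e1 : (((1:ZMod 3)*0)).val = 0 := rfl
  have e2 : (((2:ZMod 3)*0)).val = 0 := rfl
  rw [e0, e1, e2, pow_zero, one_mul, one_mul, one_mul] at hE
  exact hE

set_option maxHeartbeats 2000000 in
lemma dEq_of (n r₁ r₂ : ℕ) (hr : 0 < r₁) (h12 : r₁ ≤ r₂) (c : (Fin (n+1) → ZMod 3) → F2)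
    (hc : c ∈ abelianCode (n+1) α (Finset.Icc r₁ r₂)) (j : Fin n → ZMod 3)
    (hj : hammingNorm j ∉ Finset.Icc (r₁-1) (r₂-1)) :
    ∀ t u : ZMod 3, ddft n α (comp n c t) j = ddft n α (comp n c u) j := by
  have h2 : (2 : F4) = 0 := two_eq_zero
  have hs : (1 : F4) + α + α ^ 2 = 0 := alpha_sum hα
  have hnot : ∀ k : ZMod 3, k ≠ 0 →
      hammingNorm (Fin.cons k j : Fin (n+1) → ZMod 3) ∉ Finset.Icc r₁ r₂ := by
    intro k hk
    rw [norm_cons, if_neg hk]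
    simp only [Finset.mem_Icc] at hj ⊢
    omega
  have hE : ∀ k : ZMod 3, k ≠ 0 →
      α ^ ((0:ZMod 3)*k).val * ddft n α (comp n c 0) j
        + α ^ ((1:ZMod 3)*k).val * ddft n α (comp n c 1) j
        + α ^ ((2:ZMod 3)*k).val * ddft n α (comp n c 2) j = 0 := by
    intro k hk
    have hE := (mem_code (n+1) α _ c).mp hc _ (hnot k hk)
    rw [ddft_cons hα] at hE
    rw [zmod3_sum (fun t => α ^ (t*k).val * ddft n α (comp n c t) j)] at hE
    exact hE
  set d0 := ddft n α (comp n c 0) j with hd0def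
  set d1 := ddft n α (comp n c 1) j with hd1def
  set d2 := ddft n α (comp n c 2) j with hd2def
  have E1 : d0 + α * d1 + α ^ 2 * d2 = 0 := by
    have := hE 1 (by decide)
    have e0 : (((0:ZMod 3)*1)).val = 0 := rfl
    have e1 : (((1:ZMod 3)*1)).val = 1 := rfl
    have e2 : (((2:ZMod 3)*1)).val = 2 := rfl
    rwa [e0, e1, e2, pow_zero, pow_one, one_mul] at this
  have E2 : d0 + α ^ 2 * d1 + α * d2 = 0 := by
    have := hE 2 (by decide)
    have e0 : (((0:ZMod 3)*2)).val = 0 := rfl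
    have e1 : (((1:ZMod 3)*2)).val = 2 := rfl
    have e2 : (((2:ZMod 3)*2)).val = 1 := rfl
    rwa [e0, e1, e2, pow_zero, pow_one, one_mul] at this
  have h12' : d1 = d2 := by linear_combination E1 + E2 - (d1 + d2) * hs + (d1 - d0) * h2
  have h01 : d0 = d1 := by linear_combination E1 + α ^ 2 * h12' - d1 * hs
  have h3 : ∀ v : ZMod 3, v = 0 ∨ v = 1 ∨ v = 2 := by decide
  intro t u
  rcases h3 t with h|h|h <;> rcases h3 u with h'|h'|h' <;> subst h <;> subst h' <;>
    first
      | rfl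
      | exact h01
      | exact h01.symm
      | exact h01.trans h12'
      | exact (h01.trans h12').symm
      | exact h12'
      | exact h12'.symm

end main2

/-- The BiD code as the span of the rows of `A3pow m` with weight in the prescribed range. -/
noncomputable def BiD (m r₁ r₂ : ℕ) : Submodule F2 ((Fin m → ZMod 3) → F2) :=
  Submodule.span F2 {a | ∃ r, (2^r₂ * 3^(m-r₂) ≤ hammingNorm (A3pow m r) ∧
    hammingNorm (A3pow m r) ≤ 2^r₁ * 3^(m-r₁)) ∧ a = A3pow m r}

/-- Minimum distance of a linear code. -/
noncomputable def minDist {m : ℕ} (C : Submodule F2 ((Fin m → ZMod 3) → F2)) : ℕ :=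
  sInf {d : ℕ | ∃ a ∈ C, a ≠ 0 ∧ hammingNorm a = d}



lemma ddft_zero (m : ℕ) (α : F4) (j : Fin m → ZMod 3) : ddft m α 0 j = 0 := by
  rw [← dftL_eq, map_zero]

lemma minDist_le {n : ℕ} (C : Submodule F2 ((Fin n → ZMod 3) → F2))
    (a : (Fin n → ZMod 3) → F2) (ha : a ∈ C) (h0 : a ≠ 0) :
    minDist C ≤ hammingNorm a :=
  Nat.sInf_le ⟨a, ha, h0, rfl⟩

lemma f2_add_eq_zero {n : ℕ} (a b : (Fin n → ZMod 3) → F2) (h : a + b = 0) : a = b := by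
  funext x
  have hx := congrFun h x
  have hz : ∀ u v : F2, u + v = 0 → u = v := by decide
  exact hz _ _ hx

section main3
variable {α : F4} (hα : orderOf α = 3)
include hα

lemma factSum (n r₁ r₂ : ℕ) (c : (Fin (n+1) → ZMod 3) → F2)
    (hc : c ∈ abelianCode (n+1) α (Finset.Icc r₁ r₂)) :
    comp n c 0 + comp n c 1 + comp n c 2 ∈ abelianCode n α (Finset.Icc r₁ r₂) := by
  rw [mem_code]
  intro j hj
  rw [ddft_add, ddft_add]
  exact sum_ddft hα n r₁ r₂ c hc j hj

lemma factPair (n r₁ r₂ : ℕ) (hr : 0 < r₁) (h12 : r₁ ≤ r₂) (c : (Fin (n+1) → ZMod 3) → F2)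
    (hc : c ∈ abelianCode (n+1) α (Finset.Icc r₁ r₂)) (t u : ZMod 3) :
    comp n c t + comp n c u ∈ abelianCode n α (Finset.Icc (r₁-1) (r₂-1)) := by
  rw [mem_code]
  intro j hj
  rw [ddft_add, dEq_of hα n r₁ r₂ hr h12 c hc j hj t u]
  exact CharTwo.add_self_eq_zero _

lemma factEach (n r₁ r₂ : ℕ) (hr : 0 < r₁) (h12 : r₁ ≤ r₂) (c : (Fin (n+1) → ZMod 3) → F2)
    (hc : c ∈ abelianCode (n+1) α (Finset.Icc r₁ r₂)) (t : ZMod 3) :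
    comp n c t ∈ abelianCode n α (Finset.Icc (r₁-1) r₂) := by
  rw [mem_code]
  intro j hj
  have hj1 : hammingNorm j ∉ Finset.Icc r₁ r₂ := by
    simp only [Finset.mem_Icc] at hj ⊢; omega
  have hj2 : hammingNorm j ∉ Finset.Icc (r₁-1) (r₂-1) := by
    simp only [Finset.mem_Icc] at hj ⊢; omega
  have hsum := sum_ddft hα n r₁ r₂ c hc j hj1
  have dEq := dEq_of hα n r₁ r₂ hr h12 c hc j hj2
  rw [dEq 1 0, dEq 2 0] at hsum
  have h2 : (2:F4) = 0 := two_eq_zero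
  have h00 : ddft n α (comp n c 0) j = 0 := by
    linear_combination hsum - ddft n α (comp n c 0) j * h2
  rw [dEq t 0]
  exact h00

lemma embed_mem (n r₁ r₂ : ℕ) (hr : 0 < r₁) (h12 : r₁ ≤ r₂) (b : (Fin n → ZMod 3) → F2)
    (hb : b ∈ abelianCode n α (Finset.Icc (r₁-1) (r₂-1)))
    (c : (Fin (n+1) → ZMod 3) → F2)
    (h0 : comp n c 0 = b) (h1 : comp n c 1 = b) (h2c : comp n c 2 = 0) :
    c ∈ abelianCode (n+1) α (Finset.Icc r₁ r₂) := by
  rw [mem_code]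
  intro j' hj'
  rw [← Fin.cons_self_tail j'] at hj' ⊢
  rw [ddft_cons hα]
  rw [zmod3_sum (fun t => α ^ (t * j' 0).val * ddft n α (comp n c t) (Fin.tail j'))]
  rw [h0, h1, h2c, ddft_zero, mul_zero, add_zero]
  have h3 : j' 0 = 0 ∨ j' 0 = 1 ∨ j' 0 = 2 := by
    have : ∀ v : ZMod 3, v = 0 ∨ v = 1 ∨ v = 2 := by decide
    exact this _
  have h2 : (2:F4) = 0 := two_eq_zero
  rcases h3 with h | h | h <;> rw [h]
  · have e0 : (((0:ZMod 3)*0)).val = 0 := rfl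
    have e1 : (((1:ZMod 3)*0)).val = 0 := rfl
    rw [e0, e1, pow_zero, one_mul]
    linear_combination ddft n α b (Fin.tail j') * h2
  · have hDb : ddft n α b (Fin.tail j') = 0 := by
      refine (mem_code n α _ b).mp hb (Fin.tail j') ?_
      rw [norm_cons, if_neg (by rw [h]; decide)] at hj'
      simp only [Finset.mem_Icc] at hj' ⊢
      omega
    rw [hDb, mul_zero, mul_zero, add_zero]
  · have hDb : ddft n α b (Fin.tail j') = 0 := by
      refine (mem_code n α _ b).mp hb (Fin.tail j') ?_
      rw [norm_cons, if_neg (by rw [h]; decide)] at hj'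
      simp only [Finset.mem_Icc] at hj' ⊢
      omega
    rw [hDb, mul_zero, mul_zero, add_zero]

end main3

section main4
variable {α : F4} (hα : orderOf α = 3)
include hα

lemma embed (n r₁ r₂ : ℕ) (hr : 0 < r₁) (h12 : r₁ ≤ r₂) (b : (Fin n → ZMod 3) → F2)
    (hb : b ∈ abelianCode n α (Finset.Icc (r₁-1) (r₂-1))) (hb0 : b ≠ 0) :
    ∃ c : (Fin (n+1) → ZMod 3) → F2,
      c ∈ abelianCode (n+1) α (Finset.Icc r₁ r₂) ∧ c ≠ 0 := by
  refine ⟨fun i => if i 0 = 2 then 0 else b (Fin.tail i), ?_, ?_⟩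
  · refine embed_mem hα n r₁ r₂ hr h12 b hb _ ?_ ?_ ?_
    · funext x
      show (if (Fin.cons (0:ZMod 3) x : Fin (n+1) → ZMod 3) 0 = 2 then (0:F2)
        else b (Fin.tail (Fin.cons (0:ZMod 3) x : Fin (n+1) → ZMod 3))) = b x
      rw [Fin.cons_zero, if_neg (by decide), Fin.tail_cons]
    · funext x
      show (if (Fin.cons (1:ZMod 3) x : Fin (n+1) → ZMod 3) 0 = 2 then (0:F2)
        else b (Fin.tail (Fin.cons (1:ZMod 3) x : Fin (n+1) → ZMod 3))) = b x
      rw [Fin.cons_zero, if_neg (by decide), Fin.tail_cons]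
    · funext x
      show (if (Fin.cons (2:ZMod 3) x : Fin (n+1) → ZMod 3) 0 = 2 then (0:F2)
        else b (Fin.tail (Fin.cons (2:ZMod 3) x : Fin (n+1) → ZMod 3))) = (0 : F2)
      rw [Fin.cons_zero, if_pos rfl]
  · intro hzero
    apply hb0
    funext x
    have := congrFun hzero (Fin.cons (0:ZMod 3) x)
    rwa [Fin.cons_zero, if_neg (by decide), Fin.tail_cons] at this

lemma one_nonzero_case (n r₁ r₂ : ℕ) (hr : 0 < r₁) (h12 : r₁ ≤ r₂)
    (x : (Fin n → ZMod 3) → F2) (hx0 : x ≠ 0)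
    (hxW : x ∈ abelianCode n α (Finset.Icc r₁ r₂))
    (hxP : x ∈ abelianCode n α (Finset.Icc (r₁-1) (r₂-1))) :
    r₁ < r₂ ∧ minDist (abelianCode n α (Finset.Icc r₁ (r₂-1))) ≤ hammingNorm x := by
  by_cases hlt : r₁ < r₂
  · refine ⟨hlt, minDist_le _ _ ?_ hx0⟩
    refine code_inter n _ _ _ ?_ x hxW hxP
    intro w hw
    simp only [Finset.mem_Icc] at hw ⊢
    omega
  · exfalso
    apply hx0
    refine code_empty hα n x (code_inter n _ _ _ ?_ x hxW hxP)
    intro w _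
    simp only [Finset.mem_Icc]
    omega

lemma main_bound (n r₁ r₂ : ℕ) (hr : 0 < r₁) (h12 : r₁ ≤ r₂)
    (c : (Fin (n+1) → ZMod 3) → F2)
    (hc : c ∈ abelianCode (n+1) α (Finset.Icc r₁ r₂)) (hc0 : c ≠ 0) :
    (r₁ < r₂ ∧ minDist (abelianCode n α (Finset.Icc r₁ (r₂-1))) ≤ hammingNorm c)
    ∨ 2 * minDist (abelianCode n α (Finset.Icc (r₁-1) (r₂-1))) ≤ hammingNorm c
    ∨ (3 * minDist (abelianCode n α (Finset.Icc (r₁-1) r₂)) ≤ hammingNorm c ∧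
       (3 * minDist (abelianCode n α (Finset.Icc r₁ r₂)) ≤ hammingNorm c ∨
        minDist (abelianCode n α (Finset.Icc (r₁-1) (r₂-1)))
          + minDist (abelianCode n α (Finset.Icc (r₁-1) r₂)) ≤ hammingNorm c)) := by
  have hw : hammingNorm c = hammingNorm (comp n c 0) + hammingNorm (comp n c 1)
      + hammingNorm (comp n c 2) := by
    rw [norm_split, zmod3_sum (fun t => hammingNorm (comp n c t))]
  have hS := factSum hα n r₁ r₂ c hc
  have hP := factPair hα n r₁ r₂ hr h12 c hc
  have hE := factEach hα n r₁ r₂ hr h12 c hc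
  have hnz : ¬(comp n c 0 = 0 ∧ comp n c 1 = 0 ∧ comp n c 2 = 0) := by
    rintro ⟨ha, hb, hd⟩
    apply hc0
    apply comp_eq_zero
    intro t
    have h3 : ∀ v : ZMod 3, v = 0 ∨ v = 1 ∨ v = 2 := by decide
    rcases h3 t with h|h|h <;> rw [h] <;> assumption
  by_cases hz0 : comp n c 0 = 0 <;> by_cases hz1 : comp n c 1 = 0 <;>
    by_cases hz2 : comp n c 2 = 0
  · exact absurd ⟨hz0, hz1, hz2⟩ hnz
  -- only c2 ≠ 0
  · left
    rw [hz0, hz1, zero_add, zero_add] at hS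
    have hxP := hP 0 2
    rw [hz0, zero_add] at hxP
    obtain ⟨hlt, hd⟩ := one_nonzero_case hα n r₁ r₂ hr h12 _ hz2 hS hxP
    exact ⟨hlt, le_trans hd (by omega)⟩
  -- only c1 ≠ 0
  · left
    rw [hz0, hz2, zero_add, add_zero] at hS
    have hxP := hP 0 1
    rw [hz0, zero_add] at hxP
    obtain ⟨hlt, hd⟩ := one_nonzero_case hα n r₁ r₂ hr h12 _ hz1 hS hxP
    exact ⟨hlt, le_trans hd (by omega)⟩
  -- c1, c2 ≠ 0 ; c0 = 0
  · right; left
    have hp1 := hP 0 1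
    rw [hz0, zero_add] at hp1
    have hp2 := hP 0 2
    rw [hz0, zero_add] at hp2
    have d1 := minDist_le _ _ hp1 hz1
    have d2 := minDist_le _ _ hp2 hz2
    omega
  -- only c0 ≠ 0
  · left
    rw [hz1, hz2, add_zero, add_zero] at hS
    have hxP := hP 0 1
    rw [hz1, add_zero] at hxP
    obtain ⟨hlt, hd⟩ := one_nonzero_case hα n r₁ r₂ hr h12 _ hz0 hS hxP
    exact ⟨hlt, le_trans hd (by omega)⟩
  -- c0, c2 ≠ 0 ; c1 = 0
  · right; left
    have hp1 := hP 0 1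
    rw [hz1, add_zero] at hp1
    have hp2 := hP 1 2
    rw [hz1, zero_add] at hp2
    have d1 := minDist_le _ _ hp1 hz0
    have d2 := minDist_le _ _ hp2 hz2
    omega
  -- c0, c1 ≠ 0 ; c2 = 0
  · right; left
    have hp1 := hP 0 2
    rw [hz2, add_zero] at hp1
    have hp2 := hP 1 2
    rw [hz2, add_zero] at hp2
    have d1 := minDist_le _ _ hp1 hz0
    have d2 := minDist_le _ _ hp2 hz1
    omega
  -- all nonzero
  · right; right
    have e0 := minDist_le _ _ (hE 0) hz0
    have e1 := minDist_le _ _ (hE 1) hz1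
    have e2 := minDist_le _ _ (hE 2) hz2
    refine ⟨by omega, ?_⟩
    by_cases hq : comp n c 0 + comp n c 1 = 0
    · by_cases hq2 : comp n c 1 + comp n c 2 = 0
      · left
        have heq01 := f2_add_eq_zero _ _ hq
        have heq12 := f2_add_eq_zero _ _ hq2
        rw [hq, zero_add] at hS
        have hD := minDist_le _ _ hS hz2
        have hw01 : hammingNorm (comp n c 0) = hammingNorm (comp n c 2) := by
          rw [heq01, heq12]
        have hw12 : hammingNorm (comp n c 1) = hammingNorm (comp n c 2) := by
          rw [heq12]
        omega
      · right
        have hD1 := minDist_le _ _ (hP 1 2) hq2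
        have htri := hnorm_add_le n (comp n c 1) (comp n c 2)
        omega
    · right
      have hD1 := minDist_le _ _ (hP 0 1) hq
      have htri := hnorm_add_le n (comp n c 0) (comp n c 1)
      omega

end main4


/-- Recursive lower bound on the minimum distance of `𝒜(m,{r₁,…,r₂})` for
`0 < r₁ ≤ r₂ < m` (with `D₂ = +∞` when `r₁ = r₂`). -/
theorem minDist_recursive_lower_bound (m r₁ r₂ : ℕ) (h0 : 0 < r₁) (h12 : r₁ ≤ r₂)
    (h2m : r₂ < m) (α : F4) (hα : orderOf α = 3) :
    (min (if r₁ < r₂ then (minDist (abelianCode (m-1) α (Finset.Icc r₁ (r₂-1))) : ℕ∞) else ⊤)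
      (min (2 * (minDist (abelianCode (m-1) α (Finset.Icc (r₁-1) (r₂-1))) : ℕ∞))
        (max (3 * (minDist (abelianCode (m-1) α (Finset.Icc (r₁-1) r₂)) : ℕ∞))
          (min (3 * (minDist (abelianCode (m-1) α (Finset.Icc r₁ r₂)) : ℕ∞))
            ((minDist (abelianCode (m-1) α (Finset.Icc (r₁-1) (r₂-1))) : ℕ∞)
              + (minDist (abelianCode (m-1) α (Finset.Icc (r₁-1) r₂)) : ℕ∞))))))
      ≤ (minDist (abelianCode m α (Finset.Icc r₁ r₂)) : ℕ∞) := by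
  obtain ⟨n, rfl⟩ : ∃ n, m = n + 1 := ⟨m - 1, by omega⟩
  rw [show n + 1 - 1 = n from rfl]
  by_cases hS : {d : ℕ | ∃ a ∈ abelianCode (n+1) α (Finset.Icc r₁ r₂),
      a ≠ 0 ∧ hammingNorm a = d}.Nonempty
  · obtain ⟨a, haC, ha0, haw⟩ := Nat.sInf_mem hS
    have hmd : minDist (abelianCode (n+1) α (Finset.Icc r₁ r₂)) = hammingNorm a := haw.symm
    rw [hmd]
    rcases main_bound hα n r₁ r₂ h0 h12 a haC ha0 with ⟨hlt, hb⟩ | hb | ⟨hb3, hb4⟩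
    · refine le_trans (min_le_left _ _) ?_
      rw [if_pos hlt]
      exact_mod_cast hb
    · refine le_trans (min_le_right _ _) (le_trans (min_le_left _ _) ?_)
      have hcast : ((2 * minDist (abelianCode n α (Finset.Icc (r₁-1) (r₂-1))) : ℕ) : ℕ∞)
          ≤ ((hammingNorm a : ℕ) : ℕ∞) := Nat.cast_le.mpr hb
      push_cast at hcast
      exact hcast
    · refine le_trans (min_le_right _ _) (le_trans (min_le_right _ _) ?_)
      apply max_le
      · have hcast : ((3 * minDist (abelianCode n α (Finset.Icc (r₁-1) r₂)) : ℕ) : ℕ∞)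
            ≤ ((hammingNorm a : ℕ) : ℕ∞) := Nat.cast_le.mpr hb3
        push_cast at hcast
        exact hcast
      · rcases hb4 with hb | hb
        · refine le_trans (min_le_left _ _) ?_
          have hcast : ((3 * minDist (abelianCode n α (Finset.Icc r₁ r₂)) : ℕ) : ℕ∞)
              ≤ ((hammingNorm a : ℕ) : ℕ∞) := Nat.cast_le.mpr hb
          push_cast at hcast
          exact hcast
        · refine le_trans (min_le_right _ _) ?_
          have hcast : ((minDist (abelianCode n α (Finset.Icc (r₁-1) (r₂-1)))
              + minDist (abelianCode n α (Finset.Icc (r₁-1) r₂)) : ℕ) : ℕ∞)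
              ≤ ((hammingNorm a : ℕ) : ℕ∞) := Nat.cast_le.mpr hb
          push_cast at hcast
          exact hcast
  · have hempty : {d : ℕ | ∃ a ∈ abelianCode (n+1) α (Finset.Icc r₁ r₂),
        a ≠ 0 ∧ hammingNorm a = d} = ∅ := Set.not_nonempty_iff_eq_empty.mp hS
    have hD1 : minDist (abelianCode n α (Finset.Icc (r₁-1) (r₂-1))) = 0 := by
      by_contra hne
      have hS1 : {d : ℕ | ∃ a ∈ abelianCode n α (Finset.Icc (r₁-1) (r₂-1)),
          a ≠ 0 ∧ hammingNorm a = d}.Nonempty := by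
        by_contra hcon
        exact hne (by
          show sInf _ = 0
          rw [Set.not_nonempty_iff_eq_empty.mp hcon, Nat.sInf_empty])
      obtain ⟨d, b, hbC, hb0, _⟩ := hS1
      obtain ⟨cc, hccC, hcc0⟩ := embed hα n r₁ r₂ h0 h12 b hbC hb0
      have : hammingNorm cc ∈ ({} : Set ℕ) := by
        rw [← hempty]
        exact ⟨cc, hccC, hcc0, rfl⟩
      exact this
    refine le_trans (min_le_right _ _) (le_trans (min_le_left _ _) ?_)
    rw [hD1]
    have h00 : (2:ℕ∞) * ((0:ℕ) : ℕ∞) = 0 := by norm_num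
    rw [h00]
    exact zero_le
end

section
/- For m ≥ 2, the minimum nonzero Hamming weight of a codeword in BiD(m,1,1) is 4·3^{m−2}, and the maximum Hamming weight of a codeword in BiD(m,1,1) is 6·3^{m−2}. -/
open Finset

/-! ### Auxiliary machinery -/

/-- The linear map sending a tuple of functions `g i : ZMod 3 → F2` to the function
`x ↦ ∑ i, g i (x i)`. -/
def Lmap (m : ℕ) : (Fin m → (ZMod 3 → F2)) →ₗ[F2] ((Fin m → ZMod 3) → F2) where
  toFun g := fun x => ∑ i, g i (x i)
  map_add' g h := by funext x; simp [Finset.sum_add_distrib]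
  map_smul' c g := by funext x; simp [Finset.mul_sum]

lemma Lmap_single (m : ℕ) (j : Fin m) (w : ZMod 3 → F2) :
    Lmap m (Pi.single j w) = fun x => w (x j) := by
  funext x
  show (∑ i, (Pi.single j w : Fin m → ZMod 3 → F2) i (x i)) = w (x j)
  rw [Finset.sum_eq_single j]
  · simp
  · intro i _ hij; simp [Pi.single_apply, hij]
  · simp

lemma W_cases : ∀ w : ZMod 3 → F2, w 0 + w 1 + w 2 = 0 →
    w = 0 ∨ w = A3 1 ∨ w = A3 2 ∨ w = A3 1 + A3 2 := by
  decide

lemma A3_zero_row : ∀ y, A3 0 y = 1 := by decide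
lemma A3_row_sum : ∀ s : ZMod 3, s ≠ 0 → A3 s 0 + A3 s 1 + A3 s 2 = 0 := by decide

lemma A3pow_single (m : ℕ) (j : Fin m) (s : ZMod 3) :
    A3pow m (Pi.single j s) = Lmap m (Pi.single j (A3 s)) := by
  rw [Lmap_single]
  funext x
  show (∏ i, A3 ((Pi.single j s : Fin m → ZMod 3) i) (x i)) = A3 s (x j)
  rw [Finset.prod_eq_single j]
  · simp
  · intro i _ hij; rw [Pi.single_apply, if_neg hij, A3_zero_row]
  · simp

lemma hammingNorm_single' {ι : Type*} [Fintype ι] [DecidableEq ι]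
    {β : Type*} [Zero β] [DecidableEq β] (j : ι) (s : β) (hs : s ≠ 0) :
    hammingNorm (Pi.single j s : ι → β) = 1 := by
  unfold hammingNorm
  have hset : ({i | (Pi.single j s : ι → β) i ≠ 0} : Finset ι) = {j} := by
    ext i
    simp only [mem_filter, mem_univ, true_and, mem_singleton, Pi.single_apply]
    split_ifs with h <;> simp [h, hs]
  rw [hset, Finset.card_singleton]

lemma hammingNorm_A3_row : ∀ s : ZMod 3, hammingNorm (A3 s) = if s = 0 then 3 else 2 := by
  decide

lemma hammingNorm_A3pow (m : ℕ) (r : Fin m → ZMod 3) :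
    hammingNorm (A3pow m r) = 2 ^ (hammingNorm r) * 3 ^ (m - hammingNorm r) := by
  classical
  have h1 : hammingNorm (A3pow m r)
      = #(Fintype.piFinset (fun i => ({y | A3 (r i) y ≠ 0} : Finset (ZMod 3)))) := by
    unfold hammingNorm
    congr 1
    ext x
    simp only [Fintype.mem_piFinset, mem_filter, mem_univ, true_and, A3pow]
    simp [Finset.prod_ne_zero_iff]
  rw [h1, Fintype.card_piFinset]
  have h2 : ∀ i, #({y | A3 (r i) y ≠ 0} : Finset (ZMod 3))
      = if r i = 0 then 3 else 2 := by
    intro i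
    have := hammingNorm_A3_row (r i)
    unfold hammingNorm at this
    exact this
  rw [Finset.prod_congr rfl (fun i _ => h2 i), Finset.prod_ite, Finset.prod_const,
    Finset.prod_const]
  have h3 : #(univ.filter fun i => ¬ r i = 0) = hammingNorm r := rfl
  have h4 : #(univ.filter fun i => r i = 0) = m - hammingNorm r := by
    have := Finset.card_filter_add_card_filter_not (s := (univ : Finset (Fin m)))
      (p := fun i => r i = 0)
    simp only [Finset.card_univ, Fintype.card_fin] at this
    omega
  rw [h3, h4]; ring

lemma pow_two_three_eq (k m : ℕ) (h : 2^k*3^(m-k) = 2*3^(m-1)) : k = 1 := by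
  have h2 : (2 ^ k * 3 ^ (m - k)).factorization 2 = k := by
    rw [Nat.factorization_mul (by positivity) (by positivity)]
    simp [Nat.Prime.factorization_pow, Nat.Prime.factorization_self Nat.prime_two,
      Nat.factorization_eq_zero_of_not_dvd (by norm_num : ¬ 2 ∣ 3)]
  have h3 : (2 * 3 ^ (m - 1)).factorization 2 = 1 := by
    rw [Nat.factorization_mul (by norm_num) (by positivity)]
    simp [Nat.Prime.factorization_pow, Nat.Prime.factorization_self Nat.prime_two,
      Nat.factorization_eq_zero_of_not_dvd (by norm_num : ¬ 2 ∣ 3)]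
  rw [h] at h2
  omega

def Wsub : Submodule F2 (ZMod 3 → F2) where
  carrier := {w | w 0 + w 1 + w 2 = 0}
  zero_mem' := by simp
  add_mem' := by
    intro a b ha hb
    simp only [Set.mem_setOf_eq, Pi.add_apply] at *
    linear_combination ha + hb
  smul_mem' := by
    intro c a ha
    simp only [Set.mem_setOf_eq, Pi.smul_apply, smul_eq_mul] at *
    linear_combination c * ha

lemma gen_mem_BiD (m : ℕ) (j : Fin m) (s : ZMod 3) (hs : s ≠ 0) :
    Lmap m (Pi.single j (A3 s)) ∈ BiD m 1 1 := by
  apply Submodule.subset_span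
  refine ⟨Pi.single j s, ?_, (A3pow_single m j s).symm⟩
  rw [hammingNorm_A3pow, hammingNorm_single' j s hs]
  norm_num

lemma mem_BiD_iff (m : ℕ) (a : (Fin m → ZMod 3) → F2) :
    a ∈ BiD m 1 1 ↔ ∃ g : Fin m → (ZMod 3 → F2),
      (∀ i, g i 0 + g i 1 + g i 2 = 0) ∧ a = Lmap m g := by
  constructor
  · intro ha
    have : BiD m 1 1 ≤ Submodule.map (Lmap m) (Submodule.pi Set.univ fun _ => Wsub) := by
      rw [BiD, Submodule.span_le]
      rintro b ⟨r, ⟨hle, hge⟩, rfl⟩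
      rw [hammingNorm_A3pow] at hle hge
      have hk : hammingNorm r = 1 := pow_two_three_eq _ m (le_antisymm hge hle)
      unfold hammingNorm at hk
      obtain ⟨j, hj⟩ := Finset.card_eq_one.mp hk
      have hrs : r = Pi.single j (r j) := by
        funext i
        rcases eq_or_ne i j with rfl | hij
        · simp
        · rw [Pi.single_apply, if_neg hij]
          by_contra hne
          have : i ∈ ({i | r i ≠ 0} : Finset (Fin m)) := by
            simp only [mem_filter, mem_univ, true_and]; exact hne
          rw [hj, Finset.mem_singleton] at this
          exact hij this
      have hrj : r j ≠ 0 := by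
        have : j ∈ ({i | r i ≠ 0} : Finset (Fin m)) := by
          rw [hj]; exact Finset.mem_singleton_self j
        simpa using this
      refine ⟨Pi.single j (A3 (r j)), ?_, ?_⟩
      · intro i _
        rcases eq_or_ne i j with rfl | hij
        · rw [Pi.single_eq_same]; exact A3_row_sum (r i) hrj
        · rw [Pi.single_apply, if_neg hij]
          exact Wsub.zero_mem
      · rw [← A3pow_single]
        rw [← hrs]
    obtain ⟨g, hg, hga⟩ := this ha
    exact ⟨g, fun i => hg i (Set.mem_univ i), hga.symm⟩
  · rintro ⟨g, hg, rfl⟩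
    have hsum : g = ∑ j, Pi.single j (g j) := (Finset.univ_sum_single g).symm
    rw [hsum, map_sum]
    apply Submodule.sum_mem
    intro j _
    rcases W_cases (g j) (hg j) with h | h | h | h
    · rw [h]
      simp only [Pi.single_zero, map_zero]
      exact Submodule.zero_mem _
    · rw [h]; exact gen_mem_BiD m j 1 (by decide)
    · rw [h]; exact gen_mem_BiD m j 2 (by decide)
    · rw [h, Pi.single_add, map_add]
      exact Submodule.add_mem _ (gen_mem_BiD m j 1 (by decide)) (gen_mem_BiD m j 2 (by decide))

/-! ### Character sums -/

def chi : F2 → ℤ := fun a => if a = 0 then 1 else -1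

lemma chi_zero : chi 0 = 1 := rfl
lemma chi_add : ∀ a b : F2, chi (a + b) = chi a * chi b := by decide

lemma chi_sum {ι : Type*} (s : Finset ι) (f : ι → F2) :
    chi (∑ i ∈ s, f i) = ∏ i ∈ s, chi (f i) := by
  classical
  induction s using Finset.cons_induction with
  | empty => simp [chi_zero]
  | cons a s ha ih =>
    rw [Finset.sum_cons, Finset.prod_cons, chi_add, ih]

lemma sum_chi {X : Type*} [Fintype X] [DecidableEq X] (f : X → F2) :
    ∑ x : X, chi (f x) = (Fintype.card X : ℤ) - 2 * hammingNorm f := by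
  classical
  unfold chi hammingNorm
  rw [Finset.sum_ite, Finset.sum_const, Finset.sum_const]
  have h := Finset.card_filter_add_card_filter_not (s := (univ : Finset X))
      (p := fun x => f x = 0)
  push_neg at h
  simp only [smul_eq_mul, mul_one, mul_neg_one]
  have : #{x | f x ≠ 0} = #(univ.filter fun x => ¬ f x = 0) := by rfl
  rw [this]
  have hc : (Fintype.card X : ℤ) = #(filter (fun x => f x = 0) univ)
      + #(filter (fun x => ¬ f x = 0) univ) := by
    rw [← Finset.card_univ, ← h]; push_cast; ring
  rw [hc]; ring

lemma sum_chi_W : ∀ w : ZMod 3 → F2, w 0 + w 1 + w 2 = 0 →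
    (∑ y : ZMod 3, chi (w y)) = if w = 0 then 3 else -1 := by
  decide

lemma weight_formula (m : ℕ) (g : Fin m → (ZMod 3 → F2))
    (hg : ∀ i, g i 0 + g i 1 + g i 2 = 0) :
    (2 : ℤ) * hammingNorm (Lmap m g)
      = 3 ^ m - (-1) ^ (hammingNorm g) * 3 ^ (m - hammingNorm g) := by
  classical
  have h1 : ∑ x : Fin m → ZMod 3, chi (Lmap m g x) = ∏ i, ∑ y : ZMod 3, chi (g i y) := by
    have : ∀ x : Fin m → ZMod 3, chi (Lmap m g x) = ∏ i, chi (g i (x i)) := by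
      intro x
      exact chi_sum univ fun i => g i (x i)
    rw [Finset.sum_congr rfl fun x _ => this x, Finset.prod_univ_sum]
    rw [← Fintype.piFinset_univ]
  have h2 : (∏ i, ∑ y : ZMod 3, chi (g i y))
      = (-1) ^ (hammingNorm g) * 3 ^ (m - hammingNorm g) := by
    rw [Finset.prod_congr rfl fun i _ => sum_chi_W (g i) (hg i)]
    rw [Finset.prod_ite, Finset.prod_const, Finset.prod_const]
    have h3 : #(univ.filter fun i => ¬ g i = 0) = hammingNorm g := rfl
    have h4 : #(univ.filter fun i => g i = 0) = m - hammingNorm g := by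
      have := Finset.card_filter_add_card_filter_not (s := (univ : Finset (Fin m)))
        (p := fun i => g i = 0)
      simp only [Finset.card_univ, Fintype.card_fin] at this
      omega
    rw [h3, h4]; ring
  have h5 := sum_chi (Lmap m g)
  have h6 : (Fintype.card (Fin m → ZMod 3) : ℤ) = 3 ^ m := by
    simp [Fintype.card_pi]
  rw [h1, h2, h6] at h5
  linarith

lemma key_bounds (m k : ℕ) (hk1 : 1 ≤ k) (hkm : k ≤ m) (hm : 2 ≤ m) :
    (-(3:ℤ)^(m-1)) ≤ (-1)^k * 3^(m-k) ∧ ((-1)^k * 3^(m-k) : ℤ) ≤ 3^(m-2) := by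
  rcases Nat.even_or_odd k with he | ho
  · rw [he.neg_one_pow, one_mul]
    have hk2 : 2 ≤ k := by obtain ⟨t, rfl⟩ := he; omega
    constructor
    · exact le_trans (neg_nonpos.mpr (by positivity)) (by positivity)
    · exact pow_le_pow_right₀ (by norm_num) (by omega)
  · rw [ho.neg_one_pow, neg_one_mul]
    constructor
    · exact neg_le_neg (pow_le_pow_right₀ (by norm_num) (by omega))
    · exact le_trans (neg_nonpos.mpr (by positivity)) (by positivity)

lemma hammingNorm_le {m : ℕ} (g : Fin m → (ZMod 3 → F2)) : hammingNorm g ≤ m := by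
  classical
  unfold hammingNorm
  exact le_trans (Finset.card_filter_le _ _) (by simp)

set_option maxHeartbeats 2000000 in
/-- For `m ≥ 2`, the minimum nonzero weight of `BiD(m,1,1)` is `4·3^(m-2)` and the
maximum weight of a codeword is `6·3^(m-2)`. -/
theorem BiD_m_1_1_min_max_weight (m : ℕ) (hm : 2 ≤ m) :
    IsLeast {d : ℕ | ∃ a ∈ BiD m 1 1, a ≠ 0 ∧ hammingNorm a = d} (4 * 3^(m-2)) ∧
    IsGreatest {d : ℕ | ∃ a ∈ BiD m 1 1, hammingNorm a = d} (6 * 3^(m-2)) := by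
  classical
  obtain ⟨n, rfl⟩ : ∃ n, m = n + 2 := ⟨m - 2, by omega⟩
  have hsub2 : n + 2 - 2 = n := by omega
  have hsub1 : n + 2 - 1 = n + 1 := by omega
  set j0 : Fin (n+2) := ⟨0, by omega⟩ with hj0def
  set j1 : Fin (n+2) := ⟨1, by omega⟩ with hj1def
  have hj01 : j0 ≠ j1 := by
    simp [hj0def, hj1def, Fin.ext_iff]
  -- upper bound for all codewords
  have upper : ∀ a ∈ BiD (n+2) 1 1, hammingNorm a ≤ 6 * 3 ^ n := by
    intro a ha
    obtain ⟨g, hg, rfl⟩ := (mem_BiD_iff (n+2) a).mp ha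
    set k := hammingNorm g with hkdef
    rcases Nat.eq_zero_or_pos k with hk0 | hk1
    · have : g = 0 := hammingNorm_eq_zero.mp hk0
      rw [this, map_zero]
      simp [hammingNorm_zero]
    · have hw := weight_formula (n+2) g hg
      have hb := (key_bounds (n+2) k hk1 (hammingNorm_le g) (by omega)).1
      rw [← hkdef] at hw
      rw [hsub1] at hb
      have h2 : (2:ℤ) * hammingNorm (Lmap (n+2) g) ≤ 3 ^ (n+2) + 3 ^ (n+1) := by
        rw [hw]; linarith
      have h3 : (3:ℤ) ^ (n+2) + 3 ^ (n+1) = 12 * 3 ^ n := by ring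
      have h4 : (hammingNorm (Lmap (n+2) g) : ℤ) ≤ 6 * 3 ^ n := by
        rw [h3] at h2; linarith
      exact_mod_cast h4
  -- lower bound for nonzero codewords
  have lower : ∀ a ∈ BiD (n+2) 1 1, a ≠ 0 → 4 * 3 ^ n ≤ hammingNorm a := by
    intro a ha hne
    obtain ⟨g, hg, rfl⟩ := (mem_BiD_iff (n+2) a).mp ha
    set k := hammingNorm g with hkdef
    have hk1 : 1 ≤ k := by
      rcases Nat.eq_zero_or_pos k with hk0 | hk1
      · exfalso
        have : g = 0 := hammingNorm_eq_zero.mp hk0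
        rw [this, map_zero] at hne
        exact hne rfl
      · exact hk1
    have hw := weight_formula (n+2) g hg
    have hb := (key_bounds (n+2) k hk1 (hammingNorm_le g) (by omega)).2
    rw [← hkdef] at hw
    rw [hsub2] at hb
    have h2 : (3:ℤ) ^ (n+2) - 3 ^ n = 8 * 3 ^ n := by ring
    have h4 : (4 * 3 ^ n : ℤ) ≤ hammingNorm (Lmap (n+2) g) := by
      nlinarith [hw, hb]
    exact_mod_cast h4
  -- the maximum is attained
  have max_att : ∃ a ∈ BiD (n+2) 1 1, hammingNorm a = 6 * 3 ^ n := by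
    refine ⟨Lmap (n+2) (Pi.single j0 (A3 1)), gen_mem_BiD (n+2) j0 1 (by decide), ?_⟩
    have hg : ∀ i, (Pi.single j0 (A3 1) : Fin (n+2) → ZMod 3 → F2) i 0
        + (Pi.single j0 (A3 1) : Fin (n+2) → ZMod 3 → F2) i 1
        + (Pi.single j0 (A3 1) : Fin (n+2) → ZMod 3 → F2) i 2 = 0 := by
      intro i
      rcases eq_or_ne i j0 with rfl | hij
      · simp only [Pi.single_eq_same]; decide
      · simp [Pi.single_apply, hij]
    have hw := weight_formula (n+2) (Pi.single j0 (A3 1)) hg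
    rw [hammingNorm_single' j0 (A3 1) (by decide)] at hw
    rw [hsub1] at hw
    have h3 : (3:ℤ) ^ (n+2) - (-1) ^ 1 * 3 ^ (n+1) = 2 * (6 * 3 ^ n) := by ring
    rw [h3] at hw
    have : (hammingNorm (Lmap (n+2) (Pi.single j0 (A3 1))) : ℤ) = 6 * 3 ^ n := by linarith
    exact_mod_cast this
  -- the minimum is attained
  have min_att : ∃ a ∈ BiD (n+2) 1 1, a ≠ 0 ∧ hammingNorm a = 4 * 3 ^ n := by
    set g : Fin (n+2) → (ZMod 3 → F2) :=
      Pi.single j0 (A3 1) + Pi.single j1 (A3 1) with hgdef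
    have hmem : Lmap (n+2) g ∈ BiD (n+2) 1 1 := by
      rw [hgdef, map_add]
      exact Submodule.add_mem _ (gen_mem_BiD (n+2) j0 1 (by decide))
        (gen_mem_BiD (n+2) j1 1 (by decide))
    have hg : ∀ i, g i 0 + g i 1 + g i 2 = 0 := by
      intro i
      rcases eq_or_ne i j0 with rfl | h0
      · simp only [hgdef, Pi.add_apply, Pi.single_eq_same, Pi.single_apply,
          if_neg hj01]
        decide
      · rcases eq_or_ne i j1 with rfl | h1
        · simp only [hgdef, Pi.add_apply, Pi.single_eq_same, Pi.single_apply,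
            if_neg h0]
          decide
        · simp [hgdef, Pi.single_apply, h0, h1]
    have hnormg : hammingNorm g = 2 := by
      unfold hammingNorm
      have hset : ({i | g i ≠ 0} : Finset (Fin (n+2))) = {j0, j1} := by
        ext i
        simp only [mem_filter, mem_univ, true_and, mem_insert, mem_singleton]
        rcases eq_or_ne i j0 with rfl | h0
        · simp only [hgdef, Pi.add_apply, Pi.single_eq_same, Pi.single_apply, if_neg hj01]
          constructor
          · intro _; exact Or.inl trivial
          · intro _; decide
        · rcases eq_or_ne i j1 with rfl | h1
          · simp only [hgdef, Pi.add_apply, Pi.single_eq_same, Pi.single_apply, if_neg h0]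
            constructor
            · intro _; exact Or.inr trivial
            · intro _; decide
          · simp [hgdef, Pi.single_apply, h0, h1]
      rw [hset, Finset.card_insert_of_notMem (by simp [hj01]), Finset.card_singleton]
    have hw := weight_formula (n+2) g hg
    rw [hnormg, hsub2] at hw
    have h3 : (3:ℤ) ^ (n+2) - (-1) ^ 2 * 3 ^ n = 2 * (4 * 3 ^ n) := by ring
    rw [h3] at hw
    have hval : (hammingNorm (Lmap (n+2) g) : ℤ) = 4 * 3 ^ n := by linarith
    have hvaln : hammingNorm (Lmap (n+2) g) = 4 * 3 ^ n := by exact_mod_cast hval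
    refine ⟨Lmap (n+2) g, hmem, ?_, hvaln⟩
    intro h0
    rw [h0, hammingNorm_zero] at hvaln
    have : 0 < 4 * 3 ^ n := by positivity
    omega
  rw [hsub2]
  constructor
  · constructor
    · obtain ⟨a, ha, hne, hval⟩ := min_att
      exact ⟨a, ha, hne, hval⟩
    · rintro d ⟨a, ha, hne, rfl⟩
      exact lower a ha hne
  · constructor
    · obtain ⟨a, ha, hval⟩ := max_att
      exact ⟨a, ha, hval⟩
    · rintro d ⟨a, ha, rfl⟩
      exact upper a ha
end
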